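/- Let A be a finite alphabet, let γ, θ > 0 be real weights with θ < 2γ, and let L ⊆ A* be an arbitrary language. Then there exists m ∈ ℕ such that for every isometry φ ∈ Isom_{lev_{γ,θ}}(L) and every word w ∈ L one has | |φ(w)| − |w| | ≤ m. -/

import Mathlib

/-- Cost structure for Levenshtein edit distance (formerly in Mathlib). -/
structure Levenshtein.Cost (α β δ : Type*) where
  delete : α → δ
  insert : β → δ
  substitute : α → β → δ

namespace Levenshtein

/-- (Implementation detail for `levenshtein`) -/
def impl {α β δ : Type*} [AddZeroClass δ] [Min δ]
    (C : Cost α β δ)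
    (xs : List α) (y : β) (d : {r : List δ // 0 < r.length}) : {r : List δ // 0 < r.length} :=
  let ⟨ds, w⟩ := d
  xs.zip (ds.zip ds.tail) |>.foldr
    (init := ⟨[C.insert y + ds.getLast (List.ne_nil_of_length_pos w)], by simp⟩)
    (fun ⟨x, d₀, d₁⟩ ⟨r, w⟩ =>
      ⟨min (C.delete x + r[0]) (min (C.insert y + d₀) (C.substitute x y + d₁)) :: r, by simp⟩)

/-- (Implementation detail for `levenshtein`) -/
def suffixLevenshtein {α β δ : Type*} [AddZeroClass δ] [Min δ] (C : Cost α β δ)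
    (xs : List α) (ys : List β) : {r : List δ // 0 < r.length} :=
  ys.foldr
    (impl C xs)
    (xs.foldr (init := ⟨[0], by simp⟩) (fun a ⟨r, w⟩ => ⟨(C.delete a + r[0]) :: r, by simp⟩))

end Levenshtein

/-- The Levenshtein distance with costs `C` (formerly in Mathlib). -/
def levenshtein {α β δ : Type*} [AddZeroClass δ] [Min δ] (C : Levenshtein.Cost α β δ)
    (xs : List α) (ys : List β) : δ :=
  let ⟨r, w⟩ := Levenshtein.suffixLevenshtein C xs ys
  r[0]

/-- Cost structure for the generalized Levenshtein distance:
insertions and deletions cost `γ`, substitutions cost `θ`. -/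
def levCost (A : Type*) [DecidableEq A] (γ θ : ℝ) : Levenshtein.Cost A A ℝ where
  delete _ := γ
  insert _ := γ
  substitute a b := if a = b then 0 else θ

/-- The generalized Levenshtein distance `lev_{γ,θ}` between two words over `A`:
the minimal total cost of transforming one word into the other by insertions and
deletions (of cost `γ`) and substitutions (of cost `θ`). -/
def lev {A : Type*} [DecidableEq A] (γ θ : ℝ) (u v : List A) : ℝ :=
  levenshtein (levCost A γ θ) u v

/-- The isometry group of a language `L ⊆ A*` with respect to a distance `d` on `A*`:
the group (under composition) of bijections of `L` preserving `d`. -/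
def IsomGroup {A : Type*} (d : List A → List A → ℝ) (L : Set (List A)) :
    Subgroup (Equiv.Perm L) where
  carrier := {φ : Equiv.Perm L | ∀ u v : L, d (φ u) (φ v) = d u v}
  one_mem' := by intro u v; rfl
  mul_mem' := by intro φ ψ hφ hψ u v; simp only [Equiv.Perm.mul_apply]; rw [hφ, hψ]
  inv_mem' := by
    intro φ hφ u v
    have h := hφ (φ⁻¹ u) (φ⁻¹ v)
    simpa using h.symm

namespace Levenshtein

variable {α β δ : Type*} [AddZeroClass δ] [Min δ]

theorem impl_cons' (C : Cost α β δ) (x : α) (xs : List α) (y : β) (d : δ) (ds : List δ)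
    (w : 0 < (d :: ds).length) (w' : 0 < ds.length) :
    impl C (x :: xs) y ⟨d :: ds, w⟩ =
      ⟨min (C.delete x + (impl C xs y ⟨ds, w'⟩).1[0]'(impl C xs y ⟨ds, w'⟩).2)
        (min (C.insert y + d) (C.substitute x y + ds[0])) :: (impl C xs y ⟨ds, w'⟩).1,
        by simp⟩ := by
  cases ds with
  | nil => simp at w'
  | cons d' ds => rfl

theorem impl_length' (C : Cost α β δ) (xs : List α) (y : β) (d : {r : List δ // 0 < r.length})
    (w : d.1.length = xs.length + 1) : (impl C xs y d).1.length = xs.length + 1 := by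
  induction xs generalizing d with
  | nil => obtain ⟨d, hd⟩ := d; rfl
  | cons x xs ih =>
    obtain ⟨d, hd⟩ := d
    rcases d with _ | ⟨d₁, _ | ⟨d₂, ds⟩⟩
    · simp at w
    · simp at w
    · rw [impl_cons' C x xs y d₁ (d₂ :: ds) hd (by simp)]
      simp only [List.length_cons]
      rw [ih ⟨d₂ :: ds, by simp⟩ (by simpa using w)]

theorem suffix_cons_nil' (C : Cost α β δ) (x : α) (xs : List α) :
    (suffixLevenshtein C (x :: xs) ([] : List β)).1 =
      (C.delete x + (suffixLevenshtein C xs ([] : List β)).1[0]'(suffixLevenshtein C xs ([] : List β)).2)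
        :: (suffixLevenshtein C xs ([] : List β)).1 := rfl

theorem suffixLevenshtein_length' (C : Cost α β δ) (xs : List α) (ys : List β) :
    (suffixLevenshtein C xs ys).1.length = xs.length + 1 := by
  induction ys with
  | nil =>
    induction xs with
    | nil => rfl
    | cons x xs ih => rw [suffix_cons_nil', List.length_cons, ih, List.length_cons]
  | cons y ys ih => exact impl_length' C xs y _ ih

theorem impl_tail' (C : Cost α β δ) (x : α) (xs : List α) (y : β) (d : δ) (ds : List δ)
    (w : 0 < (d :: ds).length) (hds : ds.length = xs.length + 1) :
    (impl C (x :: xs) y ⟨d :: ds, w⟩).1.tail = (impl C xs y ⟨ds, by omega⟩).1 := by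
  rw [impl_cons' C x xs y d ds w (by omega)]
  rfl

theorem suffixLevenshtein_cons₁' (C : Cost α β δ) (x : α) (xs : List α) (ys : List β) :
    (suffixLevenshtein C (x :: xs) ys).1 =
      levenshtein C (x :: xs) ys :: (suffixLevenshtein C xs ys).1 := by
  have key : ∀ l : List δ, (h : 0 < l.length) → l = l[0] :: l.tail := by
    intro l h
    cases l with
    | nil => simp at h
    | cons a l => rfl
  induction ys with
  | nil => rfl
  | cons y ys ih =>
    have hS : suffixLevenshtein C (x :: xs) ys =
        ⟨levenshtein C (x :: xs) ys :: (suffixLevenshtein C xs ys).1, by simp⟩ := Subtype.ext ih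
    refine (key _ (suffixLevenshtein C (x :: xs) (y :: ys)).2).trans ?_
    congr 1
    show (impl C (x :: xs) y (suffixLevenshtein C (x :: xs) ys)).1.tail
      = (impl C xs y (suffixLevenshtein C xs ys)).1
    rw [hS]
    exact impl_tail' C x xs y _ _ _ (suffixLevenshtein_length' C xs ys)

end Levenshtein

section levenshtein_lemmas

variable {α β δ : Type*} [AddZeroClass δ] [Min δ] {C : Levenshtein.Cost α β δ}

theorem getLast_eq_zero' (l : List δ) (hl : l.length = 1) (h : l ≠ []) (hp : 0 < l.length) :
    l.getLast h = l[0]'hp := by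
  rcases l with _ | ⟨a, _ | ⟨b, l⟩⟩ <;> simp_all

theorem levenshtein_nil_nil : levenshtein C ([] : List α) ([] : List β) = 0 := rfl

theorem levenshtein_cons_nil (x : α) (xs : List α) :
    levenshtein C (x :: xs) ([] : List β) = C.delete x + levenshtein C xs ([] : List β) := rfl

theorem levenshtein_nil_cons (y : β) (ys : List β) :
    levenshtein C ([] : List α) (y :: ys) = C.insert y + levenshtein C ([] : List α) ys := by
  have hl := Levenshtein.suffixLevenshtein_length' C ([] : List α) ys
  simp only [List.length_nil, zero_add] at hl
  exact congrArg (C.insert y + ·) (getLast_eq_zero' (Levenshtein.suffixLevenshtein C [] ys).1 hl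
    (List.ne_nil_of_length_pos (Levenshtein.suffixLevenshtein C [] ys).2)
    (Levenshtein.suffixLevenshtein C [] ys).2)

theorem levenshtein_cons_cons (x : α) (xs : List α) (y : β) (ys : List β) :
    levenshtein C (x :: xs) (y :: ys) =
      min (C.delete x + levenshtein C xs (y :: ys))
        (min (C.insert y + levenshtein C (x :: xs) ys)
          (C.substitute x y + levenshtein C xs ys)) := by
  have hS : Levenshtein.suffixLevenshtein C (x :: xs) ys =
      ⟨levenshtein C (x :: xs) ys :: (Levenshtein.suffixLevenshtein C xs ys).1, by simp⟩ :=
    Subtype.ext (Levenshtein.suffixLevenshtein_cons₁' C x xs ys)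
  have hl := Levenshtein.suffixLevenshtein_length' C xs ys
  have h1 : levenshtein C (x :: xs) (y :: ys) =
      (Levenshtein.impl C (x :: xs) y (Levenshtein.suffixLevenshtein C (x :: xs) ys)).1[0]'
        (Levenshtein.impl C (x :: xs) y (Levenshtein.suffixLevenshtein C (x :: xs) ys)).2 := rfl
  rw [h1, hS, Levenshtein.impl_cons' C x xs y _ _ _ (by omega)]
  rfl

end levenshtein_lemmas

section helpers

variable {A : Type*} [DecidableEq A] {γ θ : ℝ}

private lemma lev_nil_nil : lev γ θ ([] : List A) [] = 0 := levenshtein_nil_nil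

private lemma lev_cons_nil (x : A) (xs : List A) :
    lev γ θ (x :: xs) [] = γ + lev γ θ xs [] := levenshtein_cons_nil x xs

private lemma lev_nil_cons (y : A) (ys : List A) :
    lev γ θ ([] : List A) (y :: ys) = γ + lev γ θ [] ys := levenshtein_nil_cons y ys

private lemma lev_cons_cons (x : A) (xs : List A) (y : A) (ys : List A) :
    lev γ θ (x :: xs) (y :: ys) =
      min (γ + lev γ θ xs (y :: ys))
        (min (γ + lev γ θ (x :: xs) ys)
          ((if x = y then (0:ℝ) else θ) + lev γ θ xs ys)) := levenshtein_cons_cons x xs y ys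

private lemma sub_cost_nonneg (hθ : 0 ≤ θ) (x y : A) : (0:ℝ) ≤ if x = y then (0:ℝ) else θ := by
  split <;> simp [hθ]

private lemma sub_cost_le (hθ : 0 ≤ θ) (x y : A) : (if x = y then (0:ℝ) else θ) ≤ θ := by
  split <;> simp [hθ]

private lemma lev_nil_right (u : List A) : lev γ θ u [] = γ * u.length := by
  induction u with
  | nil => rw [lev_nil_nil]; simp
  | cons x xs ih =>
    rw [lev_cons_nil, ih]
    simp only [List.length_cons]
    push_cast
    ring

private lemma lev_nil_left (v : List A) : lev γ θ [] v = γ * v.length := by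
  induction v with
  | nil => rw [lev_nil_nil]; simp
  | cons y ys ih =>
    rw [lev_nil_cons, ih]
    simp only [List.length_cons]
    push_cast
    ring

/-- Lower bound: `γ·||u|-|v|| ≤ lev u v`. -/
private lemma le_lev (hγ : 0 ≤ γ) (hθ : 0 ≤ θ) (u v : List A) :
    γ * |(u.length : ℝ) - v.length| ≤ lev γ θ u v := by
  induction u generalizing v with
  | nil =>
    rw [lev_nil_left]
    have h2 : |(List.length ([] : List A) : ℝ) - v.length| = v.length := by
      simp [abs_of_nonneg]
    rw [h2]
  | cons x xs ihu =>
    induction v with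
    | nil =>
      rw [lev_nil_right]
      have h2 : |((x :: xs).length : ℝ) - List.length ([] : List A)| = (x :: xs).length := by
        simp
        positivity
      rw [h2]
    | cons y ys ihv =>
      rw [lev_cons_cons]
      simp only [List.length_cons]
      push_cast
      have h1 := ihu (y :: ys)
      have h3 := ihu ys
      simp only [List.length_cons] at h1 ihv
      push_cast at h1 ihv
      refine le_min ?_ (le_min ?_ ?_)
      · -- delete branch
        have e1 : |((xs.length:ℝ) + 1) - ((ys.length:ℝ) + 1)| ≤ |(xs.length:ℝ) - ((ys.length:ℝ) + 1)| + 1 := by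
          have e : ((xs.length:ℝ) + 1) - ((ys.length:ℝ) + 1) = ((xs.length:ℝ) - ((ys.length:ℝ) + 1)) + 1 := by ring
          rw [e]
          exact (abs_add_le _ _).trans (by norm_num)
        have e2 : γ * |((xs.length:ℝ) + 1) - ((ys.length:ℝ) + 1)| ≤ γ * (|(xs.length:ℝ) - ((ys.length:ℝ) + 1)| + 1) :=
          mul_le_mul_of_nonneg_left e1 hγ
        have e3 : γ * (|(xs.length:ℝ) - ((ys.length:ℝ) + 1)| + 1) = γ * |(xs.length:ℝ) - ((ys.length:ℝ) + 1)| + γ := by ring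
        linarith [h1]
      · -- insert branch
        have e1 : |((xs.length:ℝ) + 1) - ((ys.length:ℝ) + 1)| ≤ |((xs.length:ℝ) + 1) - (ys.length:ℝ)| + 1 := by
          have e : ((xs.length:ℝ) + 1) - ((ys.length:ℝ) + 1) = (((xs.length:ℝ) + 1) - (ys.length:ℝ)) + (-1) := by ring
          rw [e]
          exact (abs_add_le _ _).trans (by norm_num)
        have e2 : γ * |((xs.length:ℝ) + 1) - ((ys.length:ℝ) + 1)| ≤ γ * (|((xs.length:ℝ) + 1) - (ys.length:ℝ)| + 1) :=
          mul_le_mul_of_nonneg_left e1 hγ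
        have e3 : γ * (|((xs.length:ℝ) + 1) - (ys.length:ℝ)| + 1) = γ * |((xs.length:ℝ) + 1) - (ys.length:ℝ)| + γ := by ring
        linarith [ihv]
      · -- substitute branch
        have e1 : |((xs.length:ℝ) + 1) - ((ys.length:ℝ) + 1)| = |(xs.length:ℝ) - (ys.length:ℝ)| := by ring_nf
        rw [e1]
        have := sub_cost_nonneg hθ x y
        linarith [h3]

/-- Upper bound: `lev u v ≤ θ·min(|u|,|v|) + γ·||u|-|v||`. -/
private lemma lev_le (hγ : 0 ≤ γ) (hθ : 0 ≤ θ) (u v : List A) :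
    lev γ θ u v ≤ θ * (min u.length v.length : ℕ) + γ * |(u.length : ℝ) - v.length| := by
  induction u generalizing v with
  | nil =>
    rw [lev_nil_left]
    have h1 : ((min (List.length ([] : List A)) v.length : ℕ) : ℝ) = 0 := by simp
    have h2 : |(List.length ([] : List A) : ℝ) - v.length| = v.length := by
      simp [abs_of_nonneg]
    rw [h1, h2]
    linarith
  | cons x xs ihu =>
    induction v with
    | nil =>
      rw [lev_nil_right]
      have h1 : ((min (x :: xs).length (List.length ([] : List A)) : ℕ) : ℝ) = 0 := by simp
      have h2 : |((x :: xs).length : ℝ) - List.length ([] : List A)| = (x :: xs).length := by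
        simp
        positivity
      rw [h1, h2]
      linarith
    | cons y ys ihv =>
      rw [lev_cons_cons]
      have hbr : min (γ + lev γ θ xs (y :: ys))
            (min (γ + lev γ θ (x :: xs) ys)
              ((if x = y then (0:ℝ) else θ) + lev γ θ xs ys))
          ≤ (if x = y then (0:ℝ) else θ) + lev γ θ xs ys :=
        (min_le_right _ _).trans (min_le_right _ _)
      refine hbr.trans ?_
      have h1 := ihu ys
      have h2 := sub_cost_le hθ x y
      have habs : |((x :: xs).length : ℝ) - (y :: ys).length|
          = |(xs.length : ℝ) - ys.length| := by
        simp only [List.length_cons]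
        push_cast
        ring_nf
      have hminN : min (x :: xs).length (y :: ys).length = min xs.length ys.length + 1 := by
        simp only [List.length_cons]
        omega
      have hmin : ((min (x :: xs).length (y :: ys).length : ℕ) : ℝ)
          = ((min xs.length ys.length : ℕ) : ℝ) + 1 := by
        rw [hminN]
        push_cast
        ring
      rw [habs, hmin]
      linarith

/-- If `u` is a sublist of `v`, then `lev u v ≤ γ(|v|-|u|)` (insertions only). -/
private lemma lev_sublist (hγ : 0 ≤ γ) {u v : List A} (h : List.Sublist u v) :
    lev γ θ u v ≤ γ * ((v.length : ℝ) - u.length) := by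
  induction h with
  | slnil => rw [lev_nil_nil]; simp
  | @cons l₁ l₂ a h ih =>
    have step : lev γ θ l₁ (a :: l₂) ≤ γ + lev γ θ l₁ l₂ := by
      cases l₁ with
      | nil => rw [lev_nil_cons]
      | cons x xs =>
        rw [lev_cons_cons]
        exact (min_le_right _ _).trans (min_le_left _ _)
    refine step.trans ?_
    have e : γ * (((a :: l₂).length : ℝ) - l₁.length)
        = γ + γ * ((l₂.length : ℝ) - l₁.length) := by
      simp only [List.length_cons]
      push_cast
      ring
    rw [e]
    linarith [ih]
  | @cons_cons l₁ l₂ a h ih =>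
    have step : lev γ θ (a :: l₁) (a :: l₂) ≤ lev γ θ l₁ l₂ := by
      rw [lev_cons_cons]
      refine ((min_le_right _ _).trans (min_le_right _ _)).trans ?_
      simp
    refine step.trans ?_
    have e : γ * (((a :: l₂).length : ℝ) - (a :: l₁).length)
        = γ * ((l₂.length : ℝ) - l₁.length) := by
      simp only [List.length_cons]
      push_cast
      ring
    rw [e]
    exact ih

/-- If `u` is a sublist of `v`, then `lev v u ≤ γ(|v|-|u|)` (deletions only). -/
private lemma lev_sublist' (hγ : 0 ≤ γ) {u v : List A} (h : List.Sublist u v) :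
    lev γ θ v u ≤ γ * ((v.length : ℝ) - u.length) := by
  induction h with
  | slnil => rw [lev_nil_nil]; simp
  | @cons l₁ l₂ a h ih =>
    have step : lev γ θ (a :: l₂) l₁ ≤ γ + lev γ θ l₂ l₁ := by
      cases l₁ with
      | nil => rw [lev_cons_nil]
      | cons x xs =>
        rw [lev_cons_cons]
        exact min_le_left _ _
    refine step.trans ?_
    have e : γ * (((a :: l₂).length : ℝ) - l₁.length)
        = γ + γ * ((l₂.length : ℝ) - l₁.length) := by
      simp only [List.length_cons]
      push_cast
      ring
    rw [e]
    linarith [ih]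
  | @cons_cons l₁ l₂ a h ih =>
    have step : lev γ θ (a :: l₂) (a :: l₁) ≤ lev γ θ l₂ l₁ := by
      rw [lev_cons_cons]
      refine ((min_le_right _ _).trans (min_le_right _ _)).trans ?_
      simp
    refine step.trans ?_
    have e : γ * (((a :: l₂).length : ℝ) - (a :: l₁).length)
        = γ * ((l₂.length : ℝ) - l₁.length) := by
      simp only [List.length_cons]
      push_cast
      ring
    rw [e]
    exact ih

end helpers

set_option maxHeartbeats 3000000 in
/-- For any finite alphabet `A`, weights `0 < γ`, `0 < θ < 2γ`, and any
language `L ⊆ A*`, there is `m : ℕ` bounding `||φ(w)| - |w||` for every isometry `φ` of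
`L` w.r.t. `lev_{γ,θ}` and every word `w ∈ L`. -/
theorem stmt_0 {A : Type*} [Fintype A] [DecidableEq A] (γ θ : ℝ)
    (hγ : 0 < γ) (hθ : 0 < θ) (hθ2 : θ < 2 * γ) (L : Set (List A)) :
    ∃ m : ℕ, ∀ φ ∈ IsomGroup (lev γ θ) L, ∀ w : L,
      |((φ w : List A).length : ℤ) - ((w : List A).length : ℤ)| ≤ (m : ℤ) := by
  classical
  by_contra hcon
  push_neg at hcon
  have hγ0 : (0:ℝ) ≤ γ := hγ.le
  have hθ0 : (0:ℝ) ≤ θ := hθ.le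
  -- membership in the isometry group unfolds to the isometry property
  have hmem : ∀ {φ : Equiv.Perm L}, φ ∈ IsomGroup (lev γ θ) L →
      ∀ u v : L, lev γ θ ((φ u : L) : List A) ((φ v : L) : List A)
        = lev γ θ (u : List A) (v : List A) := fun h => h
  -- `L` is nonempty
  obtain ⟨φ₀, -, w₀, -⟩ := hcon 0
  -- a word of minimal length
  have hSne : {n : ℕ | ∃ w : L, (w : List A).length = n}.Nonempty :=
    ⟨(w₀ : List A).length, w₀, rfl⟩
  set n₀ : ℕ := sInf {n : ℕ | ∃ w : L, (w : List A).length = n} with hn₀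
  obtain ⟨v₀, hv₀⟩ : ∃ w : L, (w : List A).length = n₀ := Nat.sInf_mem hSne
  have hmin : ∀ w : L, n₀ ≤ (w : List A).length := fun w => Nat.sInf_le ⟨w, rfl⟩
  set N : ℝ := (n₀ : ℝ) with hN
  have hN0 : (0:ℝ) ≤ N := by positivity
  have hminR : ∀ w : L, N ≤ ((w : List A).length : ℝ) := fun w => by
    rw [hN]; exact_mod_cast hmin w
  -- division helper
  have divle : ∀ X Y : ℝ, γ * X ≤ γ * Y → X ≤ Y := fun X Y h => (mul_le_mul_iff_right₀ hγ).1 h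
  set τ : ℝ := θ / γ with hτ
  have hγτ : γ * τ = θ := by
    rw [hτ]; field_simp
  have hτ0 : (0:ℝ) ≤ τ := by rw [hτ]; positivity
  have hτ2 : τ < 2 := by
    rw [hτ, div_lt_iff₀ hγ]; linarith
  -- lower and upper bounds on distances from `v₀`
  have low : ∀ u : L, γ * (((u : List A).length : ℝ) - N)
      ≤ lev γ θ (v₀ : List A) (u : List A) := by
    intro u
    have h1 := le_lev hγ0 hθ0 (v₀ : List A) (u : List A)
    rw [hv₀] at h1
    refine le_trans ?_ h1
    refine mul_le_mul_of_nonneg_left ?_ hγ0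
    rw [abs_sub_comm]
    exact le_abs_self _
  have upp : ∀ u : L, lev γ θ (v₀ : List A) (u : List A)
      ≤ γ * (τ * N + (((u : List A).length : ℝ) - N)) := by
    intro u
    have h1 := lev_le hγ0 hθ0 (v₀ : List A) (u : List A)
    rw [hv₀] at h1
    have hm : min n₀ (u : List A).length = n₀ := min_eq_left (hmin u)
    rw [hm] at h1
    have habs : |(n₀ : ℝ) - ((u : List A).length : ℝ)|
        = ((u : List A).length : ℝ) - N := by
      rw [abs_sub_comm]
      exact abs_of_nonneg (by linarith [hminR u])
    rw [habs] at h1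
    calc lev γ θ (v₀ : List A) (u : List A)
        ≤ θ * (n₀ : ℝ) + γ * (((u : List A).length : ℝ) - N) := h1
      _ = γ * (τ * N + (((u : List A).length : ℝ) - N)) := by
          rw [mul_add, ← mul_assoc, hγτ, hN]
  -- arbitrarily long words in the orbit of `v₀`
  have key : ∀ k : ℕ, ∃ φ : Equiv.Perm L, φ ∈ IsomGroup (lev γ θ) L ∧
      (k : ℝ) ≤ (((φ v₀ : L) : List A).length : ℝ) := by
    intro k
    obtain ⟨m, hm⟩ := exists_nat_gt ((k : ℝ) + 2 * (τ * N))
    obtain ⟨φ, hφ, w, hw⟩ := hcon m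
    refine ⟨φ, hφ, ?_⟩
    have hiso := hmem hφ
    have hψmem : φ⁻¹ ∈ IsomGroup (lev γ θ) L := (IsomGroup (lev γ θ) L).inv_mem hφ
    have hiso' := hmem hψmem
    set a : ℝ := ((w : List A).length : ℝ) with ha
    set b : ℝ := (((φ w : L) : List A).length : ℝ) with hb
    set p : ℝ := (((φ v₀ : L) : List A).length : ℝ) with hp
    set q : ℝ := (((φ⁻¹ v₀ : L) : List A).length : ℝ) with hq
    -- (i)  |b - p| ≤ τN + (a - N)
    have i1 : |b - p| ≤ τ * N + (a - N) := by
      refine divle _ _ ?_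
      have e := le_lev hγ0 hθ0 ((φ v₀ : L) : List A) ((φ w : L) : List A)
      rw [hiso v₀ w] at e
      rw [← hp, ← hb, abs_sub_comm] at e
      exact e.trans (upp w)
    -- (ii)  |q - a| ≤ τN + (b - N)
    have i2 : |q - a| ≤ τ * N + (b - N) := by
      refine divle _ _ ?_
      have e := le_lev hγ0 hθ0 ((φ⁻¹ v₀ : L) : List A) ((w : L) : List A)
      rw [← hq, ← ha] at e
      have e2 : lev γ θ ((φ⁻¹ v₀ : L) : List A) ((w : L) : List A)
          = lev γ θ (v₀ : List A) ((φ w : L) : List A) := by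
        have h3 := hiso' v₀ (φ w)
        rw [show φ⁻¹ (φ w) = w from φ.symm_apply_apply w] at h3
        exact h3
      rw [e2] at e
      exact e.trans (upp (φ w))
    -- (iii)  q - N ≤ τN + (p - N)
    have i3 : q - N ≤ τ * N + (p - N) := by
      refine divle _ _ ?_
      have e1 := low (φ⁻¹ v₀)
      rw [← hq] at e1
      have e2 : lev γ θ (v₀ : List A) ((φ⁻¹ v₀ : L) : List A)
          = lev γ θ ((φ v₀ : L) : List A) (v₀ : List A) := by
        have h3 := hiso v₀ (φ⁻¹ v₀)
        rw [show φ (φ⁻¹ v₀) = v₀ from φ.apply_symm_apply v₀] at h3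
        exact h3.symm
      rw [e2] at e1
      refine e1.trans ?_
      -- lev (φ v₀) v₀ ≤ γ(τN + (p - N))
      have h1 := lev_le hγ0 hθ0 ((φ v₀ : L) : List A) (v₀ : List A)
      rw [hv₀] at h1
      have hm2 : min ((φ v₀ : L) : List A).length n₀ = n₀ := min_eq_right (hmin _)
      rw [hm2] at h1
      have habs2 : |(((φ v₀ : L) : List A).length : ℝ) - (n₀ : ℝ)| = p - N := by
        rw [← hp, ← hN]
        exact abs_of_nonneg (by linarith [hminR (φ v₀)])
      rw [habs2] at h1
      calc lev γ θ ((φ v₀ : L) : List A) (v₀ : List A)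
          ≤ θ * (n₀ : ℝ) + γ * (p - N) := h1
        _ = γ * (τ * N + (p - N)) := by rw [mul_add, ← mul_assoc, hγτ, hN]
    -- combine: |b - a| ≤ 2τN + (p - N)
    have habs1 : b - p ≤ |b - p| := le_abs_self _
    have habs2 : a - q ≤ |q - a| := by rw [abs_sub_comm]; exact le_abs_self _
    have main : |b - a| ≤ 2 * (τ * N) + (p - N) := by
      rw [abs_sub_le_iff]
      constructor
      · nlinarith [mul_nonneg hτ0 hN0]
      · nlinarith [mul_nonneg hτ0 hN0]
    -- from the counterexample, m < |b - a|
    have hwR : (m : ℝ) < |b - a| := by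
      rw [hb, ha]
      exact_mod_cast hw
    have hpN : N ≤ p := hminR (φ v₀)
    show (k:ℝ) ≤ p
    linarith
  choose Φ hΦmem hΦlen using key
  -- Higman's lemma: extract an infinite increasing chain of orbit words
  haveI : IsRefl A (· = ·) := ⟨fun _ => rfl⟩
  haveI : IsTrans A (· = ·) := ⟨fun _ _ _ h h' => h.trans h'⟩
  have hPWOA : (Set.univ : Set A).PartiallyWellOrderedOn (· = ·) :=
    Set.finite_univ.partiallyWellOrderedOn
  have hPWO := Set.PartiallyWellOrderedOn.partiallyWellOrderedOn_sublistForall₂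
    (· = ·) hPWOA
  haveI : IsPreorder (List A) (List.SublistForall₂ (fun x1 x2 : A => x1 = x2)) :=
    @IsPreorder.mk _ _ inferInstance inferInstance
  obtain ⟨g, hg⟩ := hPWO.exists_monotone_subseq (f := fun k => ((Φ k v₀ : L) : List A))
    (fun k => fun x _ => Set.mem_univ x)
  have hsub : ∀ i j : ℕ, i ≤ j →
      List.Sublist ((Φ (g i) v₀ : L) : List A) ((Φ (g j) v₀ : L) : List A) := by
    intro i j hij
    obtain ⟨l, hl1, hl2⟩ := List.sublistForall₂_iff.1 (hg i j hij)
    rw [List.forall₂_eq_eq_eq] at hl1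
    rwa [hl1]
  have hlen : ∀ i : ℕ, (i : ℝ) ≤ (((Φ (g i) v₀ : L) : List A).length : ℝ) := by
    intro i
    refine le_trans ?_ (hΦlen (g i))
    exact_mod_cast g.strictMono.le_apply
  -- gap size
  have h2τ : (0:ℝ) < 2 - τ := by linarith
  obtain ⟨Gap, hGap⟩ := exists_nat_gt (2 * N / (2 - τ) - N + τ * N)
  -- three chained orbit words with large gaps
  set i₁ : ℕ := 0 with hi₁
  set K₁ : ℕ := ((Φ (g i₁) v₀ : L) : List A).length with hK₁
  set i₂ : ℕ := K₁ + Gap + 1 with hi₂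
  set K₂ : ℕ := ((Φ (g i₂) v₀ : L) : List A).length with hK₂
  set i₃ : ℕ := K₂ + Gap + 1 with hi₃
  set K₃ : ℕ := ((Φ (g i₃) v₀ : L) : List A).length with hK₃
  have hK₂i : i₂ ≤ K₂ := by exact_mod_cast (hlen i₂)
  have hK₃i : i₃ ≤ K₃ := by exact_mod_cast (hlen i₃)
  have h12 : i₁ ≤ i₂ := Nat.zero_le _
  have h23 : i₂ ≤ i₃ := by omega
  have h13 : i₁ ≤ i₃ := le_trans h12 h23
  have hgap1 : (K₁ : ℝ) + Gap + 1 ≤ (K₂ : ℝ) := by exact_mod_cast hK₂i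
  have hgap2 : (K₂ : ℝ) + Gap + 1 ≤ (K₃ : ℝ) := by exact_mod_cast hK₃i
  -- the middle isometry
  set ψ : Equiv.Perm L := (Φ (g i₂))⁻¹ with hψ
  have hψmem : ψ ∈ IsomGroup (lev γ θ) L :=
    (IsomGroup (lev γ θ) L).inv_mem (hΦmem (g i₂))
  have hψiso := hmem hψmem
  have hψb : ψ (Φ (g i₂) v₀) = v₀ := Equiv.symm_apply_apply _ _
  set u : L := ψ (Φ (g i₁) v₀) with hu
  set u' : L := ψ (Φ (g i₃) v₀) with hu'
  set lu : ℝ := ((u : List A).length : ℝ) with hlu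
  set lu' : ℝ := ((u' : List A).length : ℝ) with hlu'
  -- transported distances
  have E1 : lev γ θ (v₀ : List A) (u : List A)
      = lev γ θ ((Φ (g i₂) v₀ : L) : List A) ((Φ (g i₁) v₀ : L) : List A) := by
    have h3 := hψiso (Φ (g i₂) v₀) (Φ (g i₁) v₀)
    rw [hψb] at h3
    exact h3
  have E2 : lev γ θ (v₀ : List A) (u' : List A)
      = lev γ θ ((Φ (g i₂) v₀ : L) : List A) ((Φ (g i₃) v₀ : L) : List A) := by
    have h3 := hψiso (Φ (g i₂) v₀) (Φ (g i₃) v₀)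
    rw [hψb] at h3
    exact h3
  have E3 : lev γ θ (u : List A) (u' : List A)
      = lev γ θ ((Φ (g i₁) v₀ : L) : List A) ((Φ (g i₃) v₀ : L) : List A) :=
    hψiso (Φ (g i₁) v₀) (Φ (g i₃) v₀)
  -- bounds on |u| and |u'|
  have hab := hsub i₁ i₂ h12
  have hbc := hsub i₂ i₃ h23
  have hac := hsub i₁ i₃ h13
  have lo1 : lu ≤ N + ((K₂ : ℝ) - K₁) := by
    refine divle _ _ ?_
    have e1 := low u
    rw [← hlu] at e1
    have e2 := lev_sublist' (γ := γ) (θ := θ) hγ0 hab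
    rw [← hK₂, ← hK₁] at e2
    rw [← E1] at e2
    have : γ * (lu - N) ≤ γ * ((K₂ : ℝ) - K₁) := e1.trans e2
    calc γ * lu = γ * (lu - N) + γ * N := by ring
      _ ≤ γ * ((K₂ : ℝ) - K₁) + γ * N := by linarith
      _ = γ * (N + ((K₂ : ℝ) - K₁)) := by ring
  have lo2 : (K₂ : ℝ) - K₁ + N - τ * N ≤ lu := by
    have e1 := le_lev hγ0 hθ0 ((Φ (g i₂) v₀ : L) : List A) ((Φ (g i₁) v₀ : L) : List A)
    rw [← hK₂, ← hK₁] at e1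
    have habs : |(K₂ : ℝ) - K₁| = (K₂ : ℝ) - K₁ := abs_of_nonneg (by linarith)
    rw [habs] at e1
    rw [← E1] at e1
    have e2 := (upp u)
    rw [← hlu] at e2
    have := divle _ _ (e1.trans e2)
    linarith
  have lo1' : lu' ≤ N + ((K₃ : ℝ) - K₂) := by
    refine divle _ _ ?_
    have e1 := low u'
    rw [← hlu'] at e1
    have e2 := lev_sublist (γ := γ) (θ := θ) hγ0 hbc
    rw [← hK₂, ← hK₃] at e2
    rw [← E2] at e2
    have : γ * (lu' - N) ≤ γ * ((K₃ : ℝ) - K₂) := e1.trans e2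
    calc γ * lu' = γ * (lu' - N) + γ * N := by ring
      _ ≤ γ * ((K₃ : ℝ) - K₂) + γ * N := by linarith
      _ = γ * (N + ((K₃ : ℝ) - K₂)) := by ring
  have lo2' : (K₃ : ℝ) - K₂ + N - τ * N ≤ lu' := by
    have e1 := le_lev hγ0 hθ0 ((Φ (g i₂) v₀ : L) : List A) ((Φ (g i₃) v₀ : L) : List A)
    rw [← hK₂, ← hK₃] at e1
    have habs : |(K₂ : ℝ) - K₃| = (K₃ : ℝ) - K₂ := by
      rw [abs_sub_comm]
      exact abs_of_nonneg (by linarith)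
    rw [habs] at e1
    rw [← E2] at e1
    have e2 := (upp u')
    rw [← hlu'] at e2
    have := divle _ _ (e1.trans e2)
    linarith
  -- the final distance comparison
  have F : (K₃ : ℝ) - K₁ ≤ τ * min lu lu' + (lu + lu' - 2 * min lu lu') := by
    refine divle _ _ ?_
    have e1 := le_lev hγ0 hθ0 ((Φ (g i₁) v₀ : L) : List A) ((Φ (g i₃) v₀ : L) : List A)
    rw [← hK₁, ← hK₃] at e1
    have habs : |(K₁ : ℝ) - K₃| = (K₃ : ℝ) - K₁ := by
      rw [abs_sub_comm]
      exact abs_of_nonneg (by linarith)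
    rw [habs] at e1
    rw [← E3] at e1
    have e2 := lev_le hγ0 hθ0 (u : List A) (u' : List A)
    rw [← hlu, ← hlu'] at e2
    have hμ : ((min (u : List A).length (u' : List A).length : ℕ) : ℝ) = min lu lu' := by
      push_cast [hlu, hlu']
      rfl
    rw [hμ] at e2
    have habs4 : |lu - lu'| = lu + lu' - 2 * min lu lu' := by
      have h5 := max_add_min lu lu'
      have h6 := max_sub_min_eq_abs lu lu'
      rw [abs_sub_comm]
      linarith
    rw [habs4] at e2
    have hrw : θ * min lu lu' + γ * (lu + lu' - 2 * min lu lu')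
        = γ * (τ * min lu lu' + (lu + lu' - 2 * min lu lu')) := by
      rw [← hγτ]; ring
    linarith [e1.trans e2]
  -- the numerical contradiction
  set B : ℝ := (Gap : ℝ) + 1 + N - τ * N with hB
  have hμB : B ≤ min lu lu' := by
    refine le_min ?_ ?_
    · have : (Gap : ℝ) + 1 ≤ (K₂ : ℝ) - K₁ := by linarith
      linarith [lo2]
    · have : (Gap : ℝ) + 1 ≤ (K₃ : ℝ) - K₂ := by linarith
      linarith [lo2']
  have hCORE : (2 - τ) * min lu lu' ≤ 2 * N := by
    have hsum : lu + lu' ≤ 2 * N + ((K₃ : ℝ) - K₁) := by linarith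
    have hexp : (2 - τ) * min lu lu' = 2 * min lu lu' - τ * min lu lu' := by ring
    linarith [F, hsum, hexp]
  have hBbig : 2 * N / (2 - τ) < B := by
    rw [hB]
    linarith
  have hfin1 : (2 - τ) * (2 * N / (2 - τ)) = 2 * N := by
    rw [mul_comm]
    exact div_mul_cancel₀ _ h2τ.ne'
  have hfin2 : (2 - τ) * (2 * N / (2 - τ)) < (2 - τ) * B :=
    mul_lt_mul_of_pos_left hBbig h2τ
  have hfin3 : (2 - τ) * B ≤ (2 - τ) * min lu lu' :=
    mul_le_mul_of_nonneg_left hμB h2τ.le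
  have hfin4 : 2 * N < (2 - τ) * B := by
    rw [← hfin1]; exact hfin2
  linarith [hfin4, hfin3, hCORE]
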